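/- Let G be a finite group and H ≤ G a subgroup. Define the element Â_H := (1/|H|)·Σ_{h₁∈H} Σ_{h₂∈H} F^{h₁,h₂} of the ribbon algebra of G. Then: (1) Â_H * Â_H = Â_H; (2) Â_H * Ω = Ω; (3) 𝐒[Â_H] = Â_H; (4) 𝐓[Â_H] = Â_H. -/
import Mathlib


/-!
Statement 0: For a finite group `G` and a subgroup `H ≤ G`, the element
`Â_H := (1/|H|)·Σ_{h₁∈H} Σ_{h₂∈H} F^{h₁,h₂}` of the ribbon algebra of `G` satisfies
(1) `Â_H * Â_H = Â_H`, (2) `Â_H * Ω = Ω`, (3) `𝐒[Â_H] = Â_H`, (4) `𝐓[Â_H] = Â_H`.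
-/

open scoped Classical

noncomputable section

/-- `F^{g,h}`: the indicator function of the pair `(g,h)`, a basis vector of the ribbon
algebra of `G` (the complex vector space of functions `G × G → ℂ`). -/
def Fgh {G : Type*} (g h : G) : G × G → ℂ := fun x => if x = (g, h) then 1 else 0

/-- The multiplication of the ribbon algebra:
`(f₁ * f₂)(a,b) = Σ_{c ∈ G} f₁(a,c)·f₂(a,c⁻¹·b)`. -/
def rmul {G : Type*} [Group G] [Fintype G] (f₁ f₂ : G × G → ℂ) : G × G → ℂ :=
  fun x => ∑ c : G, f₁ (x.1, c) * f₂ (x.1, c⁻¹ * x.2)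

/-- The S-transformation, determined by `𝐒[F^{g,h}] = F^{h,g⁻¹}`, i.e. `(𝐒f)(a,b) = f(b⁻¹,a)`. -/
def Strans {G : Type*} [Group G] (f : G × G → ℂ) : G × G → ℂ := fun x => f (x.2⁻¹, x.1)

/-- The T-transformation, determined by `𝐓[F^{g,h}] = F^{g,gh}`, i.e. `(𝐓f)(a,b) = f(a,a⁻¹b)`. -/
def Ttrans {G : Type*} [Group G] (f : G × G → ℂ) : G × G → ℂ := fun x => f (x.1, x.1⁻¹ * x.2)

/-- The Ω-strand `Ω := (1/|G|)·Σ_{g∈G} F^{e,g}`. -/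
def Omega (G : Type*) [Group G] [Fintype G] : G × G → ℂ :=
  (Fintype.card G : ℂ)⁻¹ • ∑ g : G, Fgh (1 : G) g

/-- The boundary term `Â_H := (1/|H|)·Σ_{h₁∈H} Σ_{h₂∈H} F^{h₁,h₂}`. -/
def Ahat {G : Type*} [Group G] [Fintype G] (H : Subgroup G) : G × G → ℂ :=
  (Fintype.card H : ℂ)⁻¹ • ∑ h₁ : H, ∑ h₂ : H, Fgh (h₁ : G) (h₂ : G)

lemma indH {G : Type*} [Group G] [Fintype G] (H : Subgroup G) (a : G) :
    (∑ h : H, if a = (h : G) then (1 : ℂ) else 0) = if a ∈ H then 1 else 0 := by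
  by_cases ha : a ∈ H
  · rw [if_pos ha, Fintype.sum_eq_single (⟨a, ha⟩ : H)]
    · simp
    · intro h hh
      rw [if_neg]
      intro hhh
      exact hh (Subtype.ext hhh.symm)
  · rw [if_neg ha]
    apply Finset.sum_eq_zero
    intro h _
    rw [if_neg]
    rintro rfl
    exact ha h.2

lemma Ahat_apply {G : Type*} [Group G] [Fintype G] (H : Subgroup G) (a b : G) :
    Ahat H (a, b) = if a ∈ H ∧ b ∈ H then (Fintype.card H : ℂ)⁻¹ else 0 := by
  have key : (∑ h₁ : H, ∑ h₂ : H, Fgh (h₁ : G) (h₂ : G)) (a, b)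
      = if a ∈ H ∧ b ∈ H then (1 : ℂ) else 0 := by
    simp only [Finset.sum_apply, Fgh, Prod.mk.injEq, Prod.ext_iff]
    have : ∀ h₁ : H, (∑ h₂ : H, if a = (h₁:G) ∧ b = (h₂:G) then (1:ℂ) else 0)
        = (if a = (h₁:G) then (1:ℂ) else 0) * (if b ∈ H then 1 else 0) := by
      intro h₁
      rw [← indH H b, Finset.mul_sum]
      congr 1
      ext h₂
      by_cases h : a = (h₁:G) <;> by_cases h' : b = (h₂:G) <;> simp [h, h']
    simp only [this, ← Finset.sum_mul, indH H a]
    by_cases ha : a ∈ H <;> by_cases hb : b ∈ H <;> simp [ha, hb]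
  simp only [Ahat, Pi.smul_apply, key, smul_eq_mul]
  split <;> simp

lemma Omega_apply {G : Type*} [Group G] [Fintype G] (a b : G) :
    Omega G (a, b) = if a = 1 then (Fintype.card G : ℂ)⁻¹ else 0 := by
  simp only [Omega, Pi.smul_apply, Finset.sum_apply, Fgh, Prod.mk.injEq, smul_eq_mul]
  have h1 : (∑ x : G, if a = 1 ∧ b = x then (1 : ℂ) else 0) = if a = 1 then 1 else 0 := by
    simp [ite_and]
  rw [h1]
  split <;> simp

/-- Spontaneous-symmetry-breaking boundary terms satisfy the four consistency conditions. -/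
theorem ssb_boundary_terms (G : Type*) [Group G] [Fintype G] (H : Subgroup G) :
    rmul (Ahat H) (Ahat H) = Ahat H ∧
    rmul (Ahat H) (Omega G) = Omega G ∧
    Strans (Ahat H) = Ahat H ∧
    Ttrans (Ahat H) = Ahat H := by
  set k : ℂ := (Fintype.card H : ℂ)⁻¹ with hk
  have hcard : (Fintype.card H : ℂ) ≠ 0 := by
    exact_mod_cast Fintype.card_ne_zero
  have hsumH : (∑ c : G, if c ∈ H then (k * k) else 0) = (Fintype.card H : ℂ) * (k * k) := by
    rw [Finset.sum_ite, Finset.sum_const_zero, add_zero, Finset.sum_const, nsmul_eq_mul]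
    simp [Fintype.card_subtype]
  refine ⟨?_, ?_, ?_, ?_⟩
  · funext x
    obtain ⟨a, b⟩ := x
    simp only [rmul, Ahat_apply]
    by_cases ha : a ∈ H
    · by_cases hb : b ∈ H
      · have : ∀ c : G,
            (if a ∈ H ∧ c ∈ H then k else 0) * (if a ∈ H ∧ c⁻¹ * b ∈ H then k else 0)
            = if c ∈ H then k * k else 0 := by
          intro c
          by_cases hc : c ∈ H
          · simp [ha, hb, hc, H.mul_mem (H.inv_mem hc) hb]
          · simp [hc]
        rw [Finset.sum_congr rfl (fun c _ => this c), hsumH, if_pos ⟨ha, hb⟩, hk]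
        field_simp
      · have : ∀ c : G,
            (if a ∈ H ∧ c ∈ H then k else 0) * (if a ∈ H ∧ c⁻¹ * b ∈ H then k else 0) = 0 := by
          intro c
          by_cases hc : c ∈ H
          · have : c⁻¹ * b ∉ H := fun hm => hb (by simpa using H.mul_mem hc hm)
            simp [this]
          · simp [hc]
        rw [Finset.sum_congr rfl (fun c _ => this c), Finset.sum_const_zero,
          if_neg (fun h => hb h.2)]
    · simp [ha]
  · funext x
    obtain ⟨a, b⟩ := x
    simp only [rmul, Ahat_apply, Omega_apply]
    by_cases haa : a = 1
    · subst haa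
      have : ∀ c : G,
          (if (1 : G) ∈ H ∧ c ∈ H then k else 0) *
            (if (1 : G) = 1 then ((Fintype.card G : ℂ))⁻¹ else 0)
          = (if c ∈ H then k else 0) * (Fintype.card G : ℂ)⁻¹ := by
        intro c
        by_cases hc : c ∈ H <;> simp [hc, H.one_mem]
      rw [Finset.sum_congr rfl (fun c _ => this c), ← Finset.sum_mul, if_pos rfl]
      have : (∑ c : G, if c ∈ H then k else 0) = (Fintype.card H : ℂ) * k := by
        rw [Finset.sum_ite, Finset.sum_const_zero, add_zero, Finset.sum_const, nsmul_eq_mul]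
        simp [Fintype.card_subtype]
      rw [this, hk, mul_inv_cancel₀ hcard, one_mul]
    · simp [haa]
  · funext x
    obtain ⟨a, b⟩ := x
    simp only [Strans, Ahat_apply]
    congr 1
    simp only [eq_iff_iff, H.inv_mem_iff]
    tauto
  · funext x
    obtain ⟨a, b⟩ := x
    simp only [Ttrans, Ahat_apply]
    congr 1
    simp only [eq_iff_iff]
    constructor
    · rintro ⟨h1, h2⟩
      exact ⟨h1, by simpa using H.mul_mem h1 h2⟩
    · rintro ⟨h1, h2⟩
      exact ⟨h1, H.mul_mem (H.inv_mem h1) h2⟩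

end
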